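/- arXiv:2405.04926 — 2 statements merged into one kernel-verified Lean document; each statement's English description precedes it below -/
import Mathlib

section
/- Let m, n be natural numbers, P an n×m real matrix, and Z an n×n real matrix, and let U = fromBlocks 1 Pᵀ P Z be the (m+n)×(m+n) block matrix with identity m×m top-left block. Then Matrix.rank U ≤ m if and only if Z = P * Pᵀ. -/
open Matrix

private noncomputable def jleft (m n : ℕ) : (Fin m → ℝ) →ₗ[ℝ] (Fin m ⊕ Fin n → ℝ) where
  toFun x := Sum.elim x 0
  map_add' x y := by funext i; cases i <;> simp
  map_smul' c x := by funext i; cases i <;> simp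

private noncomputable def jright (m n : ℕ) : (Fin n → ℝ) →ₗ[ℝ] (Fin m ⊕ Fin n → ℝ) where
  toFun y := Sum.elim 0 y
  map_add' x y := by funext i; cases i <;> simp
  map_smul' c x := by funext i; cases i <;> simp

private lemma jleft_inj (m n : ℕ) : Function.Injective (jleft m n) := by
  intro x y h
  funext i
  have := congrFun h (Sum.inl i)
  simpa [jleft] using this

private lemma jright_inj (m n : ℕ) : Function.Injective (jright m n) := by
  intro x y h
  funext i
  have := congrFun h (Sum.inr i)
  simpa [jright] using this

private lemma aux_zero_of_rank_le (m n : ℕ) (W : Matrix (Fin n) (Fin n) ℝ)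
    (h : (fromBlocks (1 : Matrix (Fin m) (Fin m) ℝ) 0 0 W).rank ≤ m) : W = 0 := by
  set D : Matrix (Fin m ⊕ Fin n) (Fin m ⊕ Fin n) ℝ := fromBlocks 1 0 0 W with hD
  set S₁ : Submodule ℝ (Fin m ⊕ Fin n → ℝ) := LinearMap.range (jleft m n) with hS₁
  set S₂ : Submodule ℝ (Fin m ⊕ Fin n → ℝ) :=
    (LinearMap.range W.mulVecLin).map (jright m n) with hS₂
  have h₁ : S₁ ≤ LinearMap.range D.mulVecLin := by
    rintro _ ⟨x, rfl⟩
    refine ⟨Sum.elim x 0, ?_⟩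
    simp [hD, mulVecLin_apply, fromBlocks_mulVec, jleft]
  have h₂ : S₂ ≤ LinearMap.range D.mulVecLin := by
    rintro _ ⟨_, ⟨y, rfl⟩, rfl⟩
    refine ⟨Sum.elim 0 y, ?_⟩
    simp [hD, mulVecLin_apply, fromBlocks_mulVec, jright]
  have hdisj : Disjoint S₁ S₂ := by
    rw [Submodule.disjoint_def]
    rintro v ⟨x, rfl⟩ hv2
    obtain ⟨_, ⟨y, rfl⟩, hy⟩ := hv2
    funext i
    cases i with
    | inl i =>
      have := congrFun hy (Sum.inl i)
      simpa [jleft, jright] using this.symm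
    | inr i =>
      simp [jleft]
  have hfr1 : Module.finrank ℝ S₁ = m := by
    rw [hS₁, LinearMap.finrank_range_of_inj (jleft_inj m n)]
    simp
  have hfr2 : Module.finrank ℝ S₂ = W.rank := by
    rw [hS₂]
    exact ((LinearMap.range W.mulVecLin).equivMapOfInjective _
      (jright_inj m n)).finrank_eq.symm
  have hsup : Module.finrank ℝ ↥(S₁ ⊔ S₂) = m + W.rank := by
    have := Submodule.finrank_sup_add_finrank_inf_eq S₁ S₂
    rw [hdisj.eq_bot] at this
    simpa [hfr1, hfr2] using this
  have hle : Module.finrank ℝ ↥(S₁ ⊔ S₂) ≤ D.rank :=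
    Submodule.finrank_mono (sup_le h₁ h₂)
  have hWrank : W.rank = 0 := by
    rw [hsup] at hle
    omega
  have hrange : LinearMap.range W.mulVecLin = ⊥ := by
    rw [Matrix.rank] at hWrank
    exact Submodule.finrank_eq_zero.mp hWrank
  have hzero : W.mulVecLin = 0 := LinearMap.range_eq_bot.mp hrange
  rw [← Matrix.toLin'_apply'] at hzero
  exact (LinearEquiv.map_eq_zero_iff _).mp hzero

theorem rank_fromBlocks_le_iff
    (m n : ℕ) (P : Matrix (Fin n) (Fin m) ℝ) (Z : Matrix (Fin n) (Fin n) ℝ) :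
    Matrix.rank (Matrix.fromBlocks (1 : Matrix (Fin m) (Fin m) ℝ) Pᵀ P Z) ≤ m ↔
      Z = P * Pᵀ := by
  constructor
  · intro h
    have hfac : fromBlocks (1 : Matrix (Fin m) (Fin m) ℝ) Pᵀ P Z =
        fromBlocks (1 : Matrix (Fin m) (Fin m) ℝ) 0 P 1 *
          fromBlocks (1 : Matrix (Fin m) (Fin m) ℝ) 0 0 (Z - P * Pᵀ) *
          fromBlocks (1 : Matrix (Fin m) (Fin m) ℝ) Pᵀ 0 1 := by
      simp [fromBlocks_multiply, Matrix.mul_one, Matrix.one_mul]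
    have hdetL : IsUnit (fromBlocks (1 : Matrix (Fin m) (Fin m) ℝ) 0 P 1).det := by
      rw [det_fromBlocks_zero₁₂]; simp
    have hdetR : IsUnit (fromBlocks (1 : Matrix (Fin m) (Fin m) ℝ) Pᵀ 0 1).det := by
      rw [det_fromBlocks_zero₂₁]; simp
    rw [hfac, rank_mul_eq_left_of_isUnit_det _ _ hdetR,
      rank_mul_eq_right_of_isUnit_det _ _ hdetL] at h
    have := aux_zero_of_rank_le m n (Z - P * Pᵀ) h
    exact sub_eq_zero.mp this
  · rintro rfl
    have hfac : fromBlocks (1 : Matrix (Fin m) (Fin m) ℝ) Pᵀ P (P * Pᵀ) =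
        fromRows (1 : Matrix (Fin m) (Fin m) ℝ) P * fromCols 1 Pᵀ := by
      rw [fromRows_mul_fromCols]
      simp
    rw [hfac]
    calc (fromRows (1 : Matrix (Fin m) (Fin m) ℝ) P * fromCols 1 Pᵀ).rank
        ≤ (fromCols (1 : Matrix (Fin m) (Fin m) ℝ) Pᵀ).rank := rank_mul_le_right _ _
      _ ≤ m := by simpa using (fromCols (1 : Matrix (Fin m) (Fin m) ℝ) Pᵀ).rank_le_card_height
end

section
/- Let m, n be natural numbers and P an n×m real matrix. Then Matrix.rank P = m if and only if there exists an n×n real matrix Z with Zᵀ = Z, Matrix.rank Z = m, and Matrix.rank (fromBlocks 1 Pᵀ P Z) ≤ m, where fromBlocks 1 Pᵀ P Z is the (m+n)×(m+n) block matrix with identity m×m top-left block. -/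
open Matrix

/-- `p.prod q` is linearly equivalent to `p × q`. -/
def prodSubmoduleEquiv {R M N : Type*} [CommRing R] [AddCommGroup M] [AddCommGroup N]
    [Module R M] [Module R N] (p : Submodule R M) (q : Submodule R N) :
    ↥(p.prod q) ≃ₗ[R] ↥p × ↥q where
  toFun x := (⟨x.1.1, x.2.1⟩, ⟨x.1.2, x.2.2⟩)
  invFun x := ⟨(x.1.1, x.2.1), ⟨x.1.2, x.2.2⟩⟩
  map_add' _ _ := rfl
  map_smul' _ _ := rfl
  left_inv _ := rfl
  right_inv _ := rfl

lemma range_prodMap' {R M N M' N' : Type*} [CommRing R] [AddCommGroup M] [AddCommGroup N]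
    [AddCommGroup M'] [AddCommGroup N'] [Module R M] [Module R N] [Module R M'] [Module R N']
    (f : M →ₗ[R] M') (g : N →ₗ[R] N') :
    LinearMap.range (f.prodMap g) = (LinearMap.range f).prod (LinearMap.range g) := by
  ext x
  constructor
  · rintro ⟨y, rfl⟩
    exact ⟨⟨y.1, rfl⟩, ⟨y.2, rfl⟩⟩
  · rintro ⟨⟨a, ha⟩, ⟨b, hb⟩⟩
    exact ⟨(a, b), Prod.ext ha hb⟩

lemma rank_fromBlocks_zero₁₂_zero₂₁ {m n : ℕ}
    (A : Matrix (Fin m) (Fin m) ℝ) (D : Matrix (Fin n) (Fin n) ℝ) :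
    Matrix.rank (Matrix.fromBlocks A 0 0 D) = Matrix.rank A + Matrix.rank D := by
  set e := LinearEquiv.sumArrowLequivProdArrow (Fin m) (Fin n) ℝ ℝ with he
  have key : (Matrix.fromBlocks A 0 0 D).mulVecLin =
      (e.symm.toLinearMap ∘ₗ (A.mulVecLin.prodMap D.mulVecLin)) ∘ₗ e.toLinearMap := by
    apply LinearMap.ext
    intro v
    funext i
    cases i with
    | inl i =>
      simp [he, Matrix.fromBlocks_mulVec, LinearEquiv.sumArrowLequivProdArrow,
        Function.comp_def, Equiv.sumArrowEquivProdArrow]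
    | inr i =>
      simp [he, Matrix.fromBlocks_mulVec, LinearEquiv.sumArrowLequivProdArrow,
        Function.comp_def, Equiv.sumArrowEquivProdArrow]
  rw [Matrix.rank, key, LinearMap.range_comp, LinearEquiv.range, Submodule.map_top,
    LinearMap.range_comp, LinearEquiv.finrank_map_eq, range_prodMap']
  rw [(prodSubmoduleEquiv _ _).finrank_eq, Module.finrank_prod]
  rfl

theorem rank_eq_iff_exists_symmetric_Z
    (m n : ℕ) (P : Matrix (Fin n) (Fin m) ℝ) :
    Matrix.rank P = m ↔
      ∃ Z : Matrix (Fin n) (Fin n) ℝ, Zᵀ = Z ∧ Matrix.rank Z = m ∧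
        Matrix.rank (Matrix.fromBlocks (1 : Matrix (Fin m) (Fin m) ℝ) Pᵀ P Z) ≤ m := by
  constructor
  · intro h
    refine ⟨P * Pᵀ, by simp [Matrix.transpose_mul], by rw [Matrix.rank_self_mul_transpose]; exact h, ?_⟩
    have hU : Matrix.fromBlocks (1 : Matrix (Fin m) (Fin m) ℝ) Pᵀ P (P * Pᵀ) =
        Matrix.fromRows (1 : Matrix (Fin m) (Fin m) ℝ) P *
          Matrix.fromCols (1 : Matrix (Fin m) (Fin m) ℝ) Pᵀ := by
      rw [Matrix.fromRows_mul_fromCols]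
      simp
    rw [hU]
    exact (Matrix.rank_mul_le_left _ _).trans
      ((Matrix.rank_le_card_width _).trans_eq (Fintype.card_fin m))
  · rintro ⟨Z, hsym, hZ, hU⟩
    haveI : Invertible (1 : Matrix (Fin m) (Fin m) ℝ) := invertibleOne
    have hdecomp := Matrix.fromBlocks_eq_of_invertible₁₁
      (1 : Matrix (Fin m) (Fin m) ℝ) Pᵀ P Z
    rw [invOf_one, Matrix.mul_one, Matrix.one_mul] at hdecomp
    have hL : IsUnit (Matrix.fromBlocks (1 : Matrix (Fin m) (Fin m) ℝ) 0 P 1).det := by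
      rw [Matrix.det_fromBlocks_zero₁₂]; simp
    have hR : IsUnit (Matrix.fromBlocks (1 : Matrix (Fin m) (Fin m) ℝ) Pᵀ 0 1).det := by
      rw [Matrix.det_fromBlocks_zero₂₁]; simp
    have hrank : Matrix.rank (Matrix.fromBlocks (1 : Matrix (Fin m) (Fin m) ℝ) Pᵀ P Z) =
        Matrix.rank (Matrix.fromBlocks (1 : Matrix (Fin m) (Fin m) ℝ) 0 0 (Z - P * Pᵀ)) := by
      rw [hdecomp, Matrix.rank_mul_eq_left_of_isUnit_det _ _ hR,
        Matrix.rank_mul_eq_right_of_isUnit_det _ _ hL]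
    rw [hrank, rank_fromBlocks_zero₁₂_zero₂₁, Matrix.rank_one, Fintype.card_fin] at hU
    have hW0 : Matrix.rank (Z - P * Pᵀ) = 0 := by omega
    -- rank zero implies the matrix is zero
    have hW : Z - P * Pᵀ = 0 := by
      have hrange : LinearMap.range (Z - P * Pᵀ).mulVecLin = ⊥ := by
        rw [Submodule.finrank_eq_zero.mp hW0]
      have hzero : (Z - P * Pᵀ).mulVecLin = 0 := LinearMap.range_eq_bot.mp hrange
      ext i j
      have := congrArg (fun f : ((Fin n → ℝ) →ₗ[ℝ] (Fin n → ℝ)) => f (Pi.single j 1) i) hzero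
      simp [Matrix.mulVec_single] at this
      simpa [Matrix.mul_apply, Matrix.mulVec, dotProduct, Matrix.row, mul_comm] using this
    have hZeq : Z = P * Pᵀ := by
      have := sub_eq_zero.mp hW
      exact this
    rw [hZeq, Matrix.rank_self_mul_transpose] at hZ
    exact hZ
end
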